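/- Let (G, p) be a finite critical net in ℝ^k satisfying the balance condition. Then the interior length equals the sum, over the leaves, of the inner product of the leaf vector with the position of the leaf's neighbour: L = ∑_{l ∈ ∂X} ⟪u_l, p (n_l)⟫. -/
import Mathlib


open scoped RealInnerProductSpace
open Finset

private lemma net_swap_sum {V : Type*} [Fintype V] [DecidableEq V]
    (G : SimpleGraph V) [DecidableRel G.Adj] (g : V → V → ℝ) :
    ∑ x, ∑ y ∈ G.neighborFinset x, g x y = ∑ x, ∑ y ∈ G.neighborFinset x, g y x := by
  have h : ∀ g : V → V → ℝ, ∑ x, ∑ y ∈ G.neighborFinset x, g x y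
      = ∑ x, ∑ y, if G.Adj x y then g x y else 0 := by
    intro g
    refine Finset.sum_congr rfl fun x _ => ?_
    rw [SimpleGraph.neighborFinset_eq_filter, Finset.sum_filter]
  rw [h, h, Finset.sum_comm]
  refine Finset.sum_congr rfl fun x _ => Finset.sum_congr rfl fun y _ => ?_
  simp only [G.adj_comm]

/-- In a finite critical net in `ℝ^k` satisfying the balance condition,
the interior length equals the sum over the leaves of the inner product of the leaf
vector with the position of the leaf's neighbour. -/
theorem interior_length_eq_sum_leafvector_inner_neighbour
    {k : ℕ} (hk : 1 ≤ k) {V : Type*} [Fintype V] [DecidableEq V]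
    (G : SimpleGraph V) [DecidableRel G.Adj]
    (p : V → EuclideanSpace ℝ (Fin k)) (hinj : Function.Injective p)
    (hdeg1 : ∀ x : V, 1 ≤ G.degree x)
    (hnoLL : ∀ x y : V, G.Adj x y → ¬(G.degree x = 1 ∧ G.degree y = 1))
    (hbal : ∀ x : V, 2 ≤ G.degree x →
      ∑ y ∈ G.neighborFinset x, (‖p x - p y‖)⁻¹ • (p x - p y) = 0)
    (n : V → V) (hn : ∀ l : V, G.degree l = 1 → G.Adj l (n l)) :
    (1 / 2 : ℝ) *
        ∑ x ∈ Finset.univ.filter (fun x : V => 2 ≤ G.degree x),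
          ∑ y ∈ (G.neighborFinset x).filter (fun y => 2 ≤ G.degree y), ‖p x - p y‖
      = ∑ l ∈ Finset.univ.filter (fun l : V => G.degree l = 1),
          ⟪(‖p l - p (n l)‖)⁻¹ • (p l - p (n l)), p (n l)⟫ := by
  classical
  set u : V → V → EuclideanSpace ℝ (Fin k) :=
    fun x y => (‖p x - p y‖)⁻¹ • (p x - p y) with hu
  -- basic facts
  have hne : ∀ {x y : V}, G.Adj x y → ‖p x - p y‖ ≠ 0 := by
    intro x y h
    rw [norm_ne_zero_iff, sub_ne_zero]
    exact fun hpe => G.ne_of_adj h (hinj hpe)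
  have hinnself : ∀ {x y : V}, G.Adj x y → ⟪u x y, p x - p y⟫ = ‖p x - p y‖ := by
    intro x y h
    rw [hu]
    simp only [real_inner_smul_left, real_inner_self_eq_norm_mul_norm]
    field_simp
  have huswap : ∀ x y : V, u y x = - u x y := by
    intro x y
    rw [hu]
    simp only []
    rw [show p y - p x = -(p x - p y) from (neg_sub _ _).symm, norm_neg, smul_neg]
  have hNleaf : ∀ l : V, G.degree l = 1 → G.neighborFinset l = {n l} := by
    intro l hl
    have hmem : n l ∈ G.neighborFinset l := (G.mem_neighborFinset _ _).mpr (hn l hl)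
    obtain ⟨a, ha⟩ := Finset.card_eq_one.mp (hl ▸ rfl : (G.neighborFinset l).card = 1)
    rw [ha] at hmem ⊢
    rw [Finset.mem_singleton.mp hmem]
  -- the fundamental sum S
  set S : ℝ := ∑ x, ∑ y ∈ G.neighborFinset x, ⟪u x y, p x⟫ with hSdef
  have hfilnot : Finset.univ.filter (fun x : V => ¬ 2 ≤ G.degree x)
      = Finset.univ.filter (fun x : V => G.degree x = 1) := by
    refine Finset.filter_congr fun x _ => ?_
    have := hdeg1 x
    constructor <;> intro h <;> omega
  have hS : S = ∑ l ∈ Finset.univ.filter (fun l : V => G.degree l = 1), ⟪u l (n l), p l⟫ := by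
    rw [hSdef, ← Finset.sum_filter_add_sum_filter_not Finset.univ (fun x : V => 2 ≤ G.degree x)]
    have h1 : ∑ x ∈ Finset.univ.filter (fun x : V => 2 ≤ G.degree x),
        ∑ y ∈ G.neighborFinset x, ⟪u x y, p x⟫ = 0 := by
      refine Finset.sum_eq_zero fun x hx => ?_
      rw [← sum_inner, hbal x (Finset.mem_filter.mp hx).2, inner_zero_left]
    rw [h1, zero_add, hfilnot]
    refine Finset.sum_congr rfl fun l hl => ?_
    rw [hNleaf l (Finset.mem_filter.mp hl).2, Finset.sum_singleton]
  -- total length sum T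
  have hT : ∑ x, ∑ y ∈ G.neighborFinset x, ‖p x - p y‖ = 2 * S := by
    have hsw := net_swap_sum G (fun x y => ⟪u x y, p x⟫)
    rw [two_mul, hSdef]
    nth_rewrite 2 [hsw]
    rw [← Finset.sum_add_distrib]
    refine (Finset.sum_congr rfl fun x _ => ?_).symm
    rw [← Finset.sum_add_distrib]
    refine Finset.sum_congr rfl fun y hy => ?_
    have hadj : G.Adj x y := (G.mem_neighborFinset _ _).mp hy
    rw [huswap x y, inner_neg_left, ← sub_eq_add_neg, ← inner_sub_right, hinnself hadj]
  -- splitting T into interior-interior, leaf-x, leaf-y parts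
  have hsplit : ∑ x, ∑ y ∈ G.neighborFinset x, ‖p x - p y‖
      = (∑ x, ∑ y ∈ G.neighborFinset x,
          (if 2 ≤ G.degree x ∧ 2 ≤ G.degree y then ‖p x - p y‖ else 0))
        + (∑ x, ∑ y ∈ G.neighborFinset x,
          (if G.degree x = 1 then ‖p x - p y‖ else 0))
        + (∑ x, ∑ y ∈ G.neighborFinset x,
          (if G.degree y = 1 then ‖p x - p y‖ else 0)) := by
    rw [← Finset.sum_add_distrib, ← Finset.sum_add_distrib]
    refine Finset.sum_congr rfl fun x _ => ?_
    rw [← Finset.sum_add_distrib, ← Finset.sum_add_distrib]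
    refine Finset.sum_congr rfl fun y hy => ?_
    have hadj : G.Adj x y := (G.mem_neighborFinset _ _).mp hy
    have hx := hdeg1 x
    have hy' := hdeg1 y
    have hno := hnoLL x y hadj
    rcases (by omega : G.degree x = 1 ∨ 2 ≤ G.degree x) with h1 | h1 <;>
      rcases (by omega : G.degree y = 1 ∨ 2 ≤ G.degree y) with h2 | h2
    · exact absurd ⟨h1, h2⟩ hno
    · rw [if_neg (by omega : ¬(2 ≤ G.degree x ∧ 2 ≤ G.degree y)), if_pos h1,
        if_neg (by omega : ¬ G.degree y = 1)]; ring
    · rw [if_neg (by omega : ¬(2 ≤ G.degree x ∧ 2 ≤ G.degree y)),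
        if_neg (by omega : ¬ G.degree x = 1), if_pos h2]; ring
    · rw [if_pos ⟨h1, h2⟩, if_neg (by omega : ¬ G.degree x = 1),
        if_neg (by omega : ¬ G.degree y = 1)]; ring
  -- the leaf-edge sum B
  set B : ℝ := ∑ l ∈ Finset.univ.filter (fun l : V => G.degree l = 1), ‖p l - p (n l)‖ with hBdef
  have hB1 : (∑ x, ∑ y ∈ G.neighborFinset x,
      (if G.degree x = 1 then ‖p x - p y‖ else 0)) = B := by
    have : ∀ x : V, ∑ y ∈ G.neighborFinset x, (if G.degree x = 1 then ‖p x - p y‖ else 0)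
        = if G.degree x = 1 then ∑ y ∈ G.neighborFinset x, ‖p x - p y‖ else 0 := by
      intro x; split <;> simp
    simp_rw [this]
    rw [← Finset.sum_filter]
    refine Finset.sum_congr rfl fun l hl => ?_
    rw [hNleaf l (Finset.mem_filter.mp hl).2, Finset.sum_singleton]
  have hB2 : (∑ x, ∑ y ∈ G.neighborFinset x,
      (if G.degree y = 1 then ‖p x - p y‖ else 0)) = B := by
    rw [net_swap_sum G (fun x y => if G.degree y = 1 then ‖p x - p y‖ else 0), ← hB1]
    refine Finset.sum_congr rfl fun x _ => Finset.sum_congr rfl fun y _ => ?_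
    rw [norm_sub_rev]
  -- identify the LHS interior-interior sum with the if-form
  have hA : ∑ x ∈ Finset.univ.filter (fun x : V => 2 ≤ G.degree x),
        ∑ y ∈ (G.neighborFinset x).filter (fun y => 2 ≤ G.degree y), ‖p x - p y‖
      = ∑ x, ∑ y ∈ G.neighborFinset x,
          (if 2 ≤ G.degree x ∧ 2 ≤ G.degree y then ‖p x - p y‖ else 0) := by
    rw [Finset.sum_filter]
    refine Finset.sum_congr rfl fun x _ => ?_
    by_cases h : 2 ≤ G.degree x
    · simp only [h, if_true, true_and, Finset.sum_filter]
    · simp [h]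
  have key : ∑ x ∈ Finset.univ.filter (fun x : V => 2 ≤ G.degree x),
        ∑ y ∈ (G.neighborFinset x).filter (fun y => 2 ≤ G.degree y), ‖p x - p y‖
      = 2 * S - 2 * B := by
    rw [hA]
    have := hsplit
    rw [hT, hB1, hB2] at this
    linarith
  rw [key]
  have hRHS : ∑ l ∈ Finset.univ.filter (fun l : V => G.degree l = 1),
      ⟪(‖p l - p (n l)‖)⁻¹ • (p l - p (n l)), p (n l)⟫
      = S - B := by
    rw [hS, hBdef, ← Finset.sum_sub_distrib]
    refine Finset.sum_congr rfl fun l hl => ?_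
    have hadj := hn l (Finset.mem_filter.mp hl).2
    have : ⟪u l (n l), p l⟫ - ⟪u l (n l), p (n l)⟫ = ‖p l - p (n l)‖ := by
      rw [← inner_sub_right]
      exact hinnself hadj
    have hul : (‖p l - p (n l)‖)⁻¹ • (p l - p (n l)) = u l (n l) := rfl
    rw [hul]
    linarith
  rw [hRHS]
  ring
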